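/- Let m ≥ 1, g ≥ 1 and n ≥ 1, and for each matrix X ∈ SL(m,ℂ) write det(λI − X) = λᵐ + Σ_{k=1}^{m} (−1)ᵏ c_k(X) λ^{m−k} (so c₁(X) = tr(X) and c_m(X) = det(X) = 1). Then for every choice of complex numbers τ^i_k (1 ≤ i ≤ n, 1 ≤ k ≤ m−1) there exist matrices X₁, Y₁, …, X_g, Y_g, B₁, …, B_n ∈ SL(m,ℂ) such that [X₁,Y₁]⋯[X_g,Y_g]·B₁⋯B_n = I and c_k(B_i) = τ^i_k for all 1 ≤ i ≤ n and 1 ≤ k ≤ m−1. (This expresses the surjectivity of the boundary map of the relative character variety of a genus-g surface with n boundary components when g ≥ 1.) -/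

import Mathlib

/-- `c_k(X)`, the `k`-th coefficient of the characteristic polynomial of `X ∈ SL(m,ℂ)`,
defined by `det(λI − X) = λ^m + Σ_{k=1}^m (−1)^k c_k(X) λ^{m−k}`. -/
noncomputable def charCoeff (m : ℕ) (k : ℕ) (X : Matrix.SpecialLinearGroup (Fin m) ℂ) : ℂ :=
  (-1 : ℂ) ^ k * (Matrix.charpoly (X : Matrix (Fin m) (Fin m) ℂ)).coeff (m - k)

open Polynomial Matrix

/-! ### Auxiliary lemmas -/

private lemma charpoly_diag' {m : ℕ} (d : Fin m → ℂ) :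
    (Matrix.diagonal d).charpoly = ∏ i, (X - C (d i)) := by
  rw [Matrix.charpoly]
  have : charmatrix (Matrix.diagonal d) = Matrix.diagonal (fun i => X - C (d i)) := by
    ext i j
    by_cases h : i = j
    · subst h; simp [charmatrix_apply_eq]
    · simp [charmatrix_apply_ne _ _ _ h, Matrix.diagonal_apply_ne _ h]
  rw [this, Matrix.det_diagonal]

private noncomputable def pc (m : ℕ) (c : ℕ → ℂ) : ℂ[X] :=
  X ^ m + ∑ k ∈ Finset.Icc 1 m, C ((-1) ^ k * c k) * X ^ (m - k)

private lemma pc_degree_lt (m : ℕ) (c : ℕ → ℂ) :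
    (∑ k ∈ Finset.Icc 1 m, C ((-1 : ℂ) ^ k * c k) * X ^ (m - k)).degree < (m : WithBot ℕ) := by
  apply lt_of_le_of_lt (Polynomial.degree_sum_le _ _)
  rw [Finset.sup_lt_iff (by exact_mod_cast WithBot.bot_lt_coe m)]
  intro k hk
  simp only [Finset.mem_Icc] at hk
  calc (C ((-1 : ℂ) ^ k * c k) * X ^ (m - k)).degree ≤ ((m - k : ℕ) : WithBot ℕ) :=
        Polynomial.degree_C_mul_X_pow_le _ _
    _ < (m : WithBot ℕ) := by exact_mod_cast Nat.sub_lt_of_pos_le hk.1 hk.2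

private lemma pc_monic (m : ℕ) (c : ℕ → ℂ) : (pc m c).Monic :=
  Polynomial.monic_X_pow_add (pc_degree_lt m c)

private lemma pc_degree (m : ℕ) (c : ℕ → ℂ) : (pc m c).degree = m := by
  unfold pc
  rw [Polynomial.degree_add_eq_left_of_degree_lt
      (by rw [Polynomial.degree_X_pow]; exact pc_degree_lt m c),
    Polynomial.degree_X_pow]

private lemma pc_natDegree (m : ℕ) (c : ℕ → ℂ) : (pc m c).natDegree = m :=
  Polynomial.natDegree_eq_of_degree_eq_some (pc_degree m c)

private lemma pc_coeff (m : ℕ) (c : ℕ → ℂ) (k : ℕ) (hk1 : 1 ≤ k) (hkm : k ≤ m) :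
    (pc m c).coeff (m - k) = (-1) ^ k * c k := by
  unfold pc
  rw [Polynomial.coeff_add, Polynomial.coeff_X_pow, if_neg (by omega),
    Polynomial.finset_sum_coeff]
  rw [Finset.sum_eq_single k]
  · rw [Polynomial.coeff_C_mul, Polynomial.coeff_X_pow, if_pos rfl, mul_one, zero_add]
  · intro b hb hbk
    simp only [Finset.mem_Icc] at hb
    rw [Polynomial.coeff_C_mul, Polynomial.coeff_X_pow, if_neg (by omega), mul_zero]
  · intro h; exact absurd (Finset.mem_Icc.mpr ⟨hk1, hkm⟩) h

private lemma exists_roots_fn {p : ℂ[X]} {m : ℕ} (hm : p.Monic) (hd : p.natDegree = m) :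
    ∃ r : Fin m → ℂ, p = ∏ i, (X - C (r i)) := by
  have hsplit : p.Splits := IsAlgClosed.splits p
  have hcard : Multiset.card p.roots = p.natDegree := by
    have := Polynomial.Splits.natDegree_eq_card_roots hsplit
    simpa using this.symm
  have hlen : p.roots.toList.length = m := by
    rw [Multiset.length_toList, hcard, hd]
  refine ⟨fun i => p.roots.toList.get (Fin.cast hlen.symm i), ?_⟩
  have h2 := Polynomial.C_leadingCoeff_mul_prod_multiset_X_sub_C (p := p) hcard
  rw [hm.leadingCoeff, Polynomial.C_1, one_mul] at h2
  have h3 : (List.map (fun a => X - C a) p.roots.toList).prod = p := by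
    have : (Multiset.map (fun a => X - C a) (↑p.roots.toList : Multiset ℂ)).prod = p := by
      rw [Multiset.coe_toList]; exact h2
    rwa [Multiset.map_coe, Multiset.prod_coe] at this
  have h4 : (∏ i : Fin m, (X - C (p.roots.toList.get (Fin.cast hlen.symm i))))
      = (List.map (fun a => X - C a) p.roots.toList).prod := by
    rw [← List.prod_ofFn, ← List.ofFn_getElem_eq_map p.roots.toList (fun a => X - C a)]
    exact congrArg List.prod (List.ofFn_congr hlen.symm _)
  rw [h4, h3]

private lemma permMatrix_apply' {m : ℕ} (σ : Equiv.Perm (Fin m)) (i j : Fin m) :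
    (σ.permMatrix ℂ) i j = if σ i = j then 1 else 0 := by
  simp [Equiv.Perm.permMatrix, PEquiv.toMatrix_apply, Equiv.toPEquiv_apply]

private lemma diag_is_commutator {m : ℕ} (hm : 1 ≤ m) (q : Fin m → ℂ)
    (hq : ∀ j, q j ≠ 0) (hprod : ∏ j, q j = 1) :
    ∃ D P : Matrix (Fin m) (Fin m) ℂ, D.det ≠ 0 ∧ P.det ≠ 0 ∧
      D * P = (Matrix.diagonal q) * P * D := by
  classical
  obtain ⟨m', rfl⟩ : ∃ m', m = m' + 1 := ⟨m - 1, by omega⟩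
  set q' : ℕ → ℂ := fun k => if h : k < m' + 1 then q ⟨k, h⟩ else 1 with hq'
  set μ : ℕ → ℂ := fun k => ∏ j ∈ Finset.Ico k (m' + 1), q' j with hμ
  have hμ0 : μ 0 = 1 := by
    rw [hμ]
    simp only []
    rw [← Finset.range_eq_Ico, ← Fin.prod_univ_eq_prod_range q' (m' + 1), ← hprod]
    apply Finset.prod_congr rfl
    intro i _
    simp [hq', i.isLt, Nat.lt_succ_iff.mp i.isLt]
  have hμne : ∀ k, μ k ≠ 0 := by
    intro k
    apply Finset.prod_ne_zero_iff.mpr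
    intro j _
    by_cases h : j < m' + 1
    · simpa [hq', Nat.lt_succ_iff.mp h] using hq ⟨j, h⟩
    · simp [hq', show ¬ j ≤ m' by omega]
  have hkey : ∀ i : Fin (m' + 1), μ i.val = q i * μ ((finRotate (m' + 1) i).val) := by
    rintro ⟨k, hk⟩
    by_cases h : k < m'
    · rw [finRotate_of_lt h]
      have hab : k < m' + 1 := by omega
      rw [hμ]
      simp only []
      rw [Finset.prod_eq_prod_Ico_succ_bot hab]
      congr 1
      simp [hq', Nat.lt_succ_iff.mp hk]
    · have hk' : k = m' := by omega
      subst hk'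
      rw [finRotate_last']
      have hsingle : μ k = q' k := by
        rw [hμ]
        simp only []
        rw [Finset.prod_eq_prod_Ico_succ_bot (Nat.lt_succ_self k)]
        simp
      rw [hsingle, hμ0, mul_one]
      simp [hq', hk]
  refine ⟨Matrix.diagonal (fun i => μ i.val), (finRotate (m' + 1)).permMatrix ℂ, ?_, ?_, ?_⟩
  · rw [Matrix.det_diagonal]
    exact Finset.prod_ne_zero_iff.mpr fun i _ => hμne i.val
  · rw [Matrix.det_permutation]
    rcases Int.units_eq_one_or (Equiv.Perm.sign (finRotate (m' + 1))) with h | h <;>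
      rw [h] <;> norm_num
  · ext i j
    rw [Matrix.mul_diagonal, Matrix.diagonal_mul, Matrix.diagonal_mul, permMatrix_apply']
    by_cases h : finRotate (m' + 1) i = j
    · rw [if_pos h, ← h, mul_one, mul_one]
      exact hkey i
    · rw [if_neg h]
      ring

private lemma diag_is_commutator_SL {m : ℕ} (hm : 1 ≤ m) (q : Fin m → ℂ)
    (hq : ∀ j, q j ≠ 0) (hprod : ∏ j, q j = 1) :
    ∃ X Y Q : Matrix.SpecialLinearGroup (Fin m) ℂ,
      (Q : Matrix (Fin m) (Fin m) ℂ) = Matrix.diagonal q ∧ X * Y * X⁻¹ * Y⁻¹ = Q := by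
  obtain ⟨D, P, hD, hP, hcomm⟩ := diag_is_commutator hm q hq hprod
  obtain ⟨a, ha⟩ := IsAlgClosed.exists_pow_nat_eq (k := ℂ) D.det (by omega : 0 < m)
  obtain ⟨b, hb⟩ := IsAlgClosed.exists_pow_nat_eq (k := ℂ) P.det (by omega : 0 < m)
  have hdetX : (a⁻¹ • D).det = 1 := by
    rw [Matrix.det_smul, Fintype.card_fin, inv_pow, ha, inv_mul_cancel₀ hD]
  have hdetY : (b⁻¹ • P).det = 1 := by
    rw [Matrix.det_smul, Fintype.card_fin, inv_pow, hb, inv_mul_cancel₀ hP]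
  have hdetQ : (Matrix.diagonal q).det = 1 := by rw [Matrix.det_diagonal]; exact hprod
  refine ⟨⟨a⁻¹ • D, hdetX⟩, ⟨b⁻¹ • P, hdetY⟩, ⟨Matrix.diagonal q, hdetQ⟩, rfl, ?_⟩
  set X : Matrix.SpecialLinearGroup (Fin m) ℂ := ⟨a⁻¹ • D, hdetX⟩
  set Y : Matrix.SpecialLinearGroup (Fin m) ℂ := ⟨b⁻¹ • P, hdetY⟩
  set Q : Matrix.SpecialLinearGroup (Fin m) ℂ := ⟨Matrix.diagonal q, hdetQ⟩
  have hXY : X * Y = Q * Y * X := by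
    apply Subtype.ext
    show (a⁻¹ • D) * (b⁻¹ • P) = Matrix.diagonal q * (b⁻¹ • P) * (a⁻¹ • D)
    rw [Matrix.smul_mul, Matrix.mul_smul, Matrix.mul_smul]
    congr 1
    rw [Matrix.mul_smul, Matrix.smul_mul, hcomm]
  have h1 : X * Y * X⁻¹ * Y⁻¹ = (X * Y) * (Y * X)⁻¹ := by group
  rw [h1, hXY]
  group

private lemma coe_list_prod {m : ℕ} (l : List (Matrix.SpecialLinearGroup (Fin m) ℂ)) :
    (l.prod).val = (l.map (fun A => A.val)).prod := by
  induction l with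
  | nil => simp
  | cons a l ih => simp [ih]

private lemma diag_list_prod {m : ℕ} (l : List (Fin m → ℂ)) :
    (l.map Matrix.diagonal).prod = Matrix.diagonal (fun j => (l.map (fun d => d j)).prod) := by
  induction l with
  | nil =>
    simp only [List.map_nil, List.prod_nil]
    ext i j
    by_cases h : i = j
    · subst h; simp
    · simp [Matrix.diagonal_apply_ne _ h, Matrix.one_apply_ne h]
  | cons a l ih =>
    simp only [List.map_cons, List.prod_cons, ih, Matrix.diagonal_mul_diagonal]

/-- Surjectivity of the boundary map for `g ≥ 1`: for every choice of complex numbers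
`τ^i_k` (`1 ≤ i ≤ n`, `1 ≤ k ≤ m−1`) there exist `X₁, Y₁, …, X_g, Y_g, B₁, …, B_n ∈ SL(m,ℂ)`
with `[X₁,Y₁]⋯[X_g,Y_g]·B₁⋯B_n = 1` and `c_k(B_i) = τ^i_k` for all `i`, `k`. -/
theorem boundary_map_surjective (m g n : ℕ) (hm : 1 ≤ m) (hg : 1 ≤ g) (hn : 1 ≤ n)
    (τ : Fin n → ℕ → ℂ) :
    ∃ (X Y : Fin g → Matrix.SpecialLinearGroup (Fin m) ℂ)
      (B : Fin n → Matrix.SpecialLinearGroup (Fin m) ℂ),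
      (List.ofFn fun i => X i * Y i * (X i)⁻¹ * (Y i)⁻¹).prod * (List.ofFn B).prod = 1 ∧
      ∀ (i : Fin n) (k : ℕ), 1 ≤ k → k ≤ m - 1 → charCoeff m k (B i) = τ i k := by
  classical
  -- the prescribed coefficient sequences, completed with `c_m = 1`
  set c : Fin n → ℕ → ℂ := fun i k => if k = m then 1 else τ i k with hc
  -- roots of the prescribed characteristic polynomials
  have hr : ∀ i : Fin n, ∃ r : Fin m → ℂ, pc m (c i) = ∏ j, (X - C (r j)) := fun i =>
    exists_roots_fn (pc_monic m (c i)) (pc_natDegree m (c i))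
  choose r hrr using hr
  -- products of roots are 1
  have hr1 : ∀ i : Fin n, ∏ j, r i j = 1 := by
    intro i
    have h0 : (pc m (c i)).coeff 0 = (-1) ^ m := by
      have := pc_coeff m (c i) m hm le_rfl
      rw [Nat.sub_self] at this
      rw [this, hc]
      simp
    have h0' : (pc m (c i)).coeff 0 = (-1) ^ m * ∏ j, r i j := by
      rw [Polynomial.coeff_zero_eq_eval_zero, hrr i]
      rw [Polynomial.eval_prod]
      simp only [Polynomial.eval_sub, Polynomial.eval_X, Polynomial.eval_C, zero_sub]
      have : ∀ x : Fin m, -r i x = (-1) * r i x := fun x => by ring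
      simp only [this]
      rw [Finset.prod_mul_distrib, Finset.prod_const, Finset.card_univ, Fintype.card_fin]
    have hne : ((-1 : ℂ)) ^ m ≠ 0 := by
      apply pow_ne_zero; norm_num
    have h2 : (-1 : ℂ) ^ m * ∏ j, r i j = (-1 : ℂ) ^ m * 1 := by
      rw [mul_one, ← h0']
      exact h0
    exact mul_left_cancel₀ hne h2
  have hrne : ∀ (i : Fin n) (j : Fin m), r i j ≠ 0 := by
    intro i j hz
    have := hr1 i
    rw [Finset.prod_eq_zero (Finset.mem_univ j) hz] at this
    exact one_ne_zero this.symm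
  -- the boundary matrices
  have hdetB : ∀ i : Fin n, (Matrix.diagonal (r i)).det = 1 := by
    intro i; rw [Matrix.det_diagonal]; exact hr1 i
  set B : Fin n → Matrix.SpecialLinearGroup (Fin m) ℂ :=
    fun i => ⟨Matrix.diagonal (r i), hdetB i⟩ with hB
  -- their product is the diagonal matrix with entries `s`
  set s : Fin m → ℂ := fun j => ∏ i, r i j with hs
  have hsprod : ((List.ofFn B).prod).val = Matrix.diagonal s := by
    rw [coe_list_prod]
    have h5 : (List.ofFn B).map (fun A => A.val)
        = (List.ofFn (fun i => r i)).map Matrix.diagonal := by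
      rw [List.map_ofFn, List.map_ofFn]
      rfl
    rw [h5, diag_list_prod]
    have h7 : (fun j => (List.map (fun d => d j) (List.ofFn fun i => r i)).prod) = s := by
      funext j
      rw [List.map_ofFn, List.prod_ofFn]
      rfl
    rw [h7]
  have hsne : ∀ j, s j ≠ 0 := fun j =>
    Finset.prod_ne_zero_iff.mpr fun i _ => hrne i j
  have hsprod1 : ∏ j, s j = 1 := by
    rw [hs]
    simp only []
    rw [Finset.prod_comm]
    exact Finset.prod_eq_one fun i _ => hr1 i
  -- the inverse diagonal, realized as a commutator
  set q : Fin m → ℂ := fun j => (s j)⁻¹ with hqdef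
  have hqne : ∀ j, q j ≠ 0 := fun j => inv_ne_zero (hsne j)
  have hqprod : ∏ j, q j = 1 := by
    rw [hqdef]
    simp only []
    rw [Finset.prod_inv_distrib, hsprod1, inv_one]
  obtain ⟨X₁, Y₁, Q, hQcoe, hQcomm⟩ := diag_is_commutator_SL hm q hqne hqprod
  -- Q * (∏ B) = 1
  have hQB : Q * (List.ofFn B).prod = 1 := by
    apply Subtype.ext
    show (Q * (List.ofFn B).prod).val = (1 : Matrix.SpecialLinearGroup (Fin m) ℂ).val
    rw [Matrix.SpecialLinearGroup.coe_mul, hQcoe, hsprod, Matrix.diagonal_mul_diagonal]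
    have h6 : (fun j => q j * s j) = fun _ => (1 : ℂ) := by
      funext j; rw [hqdef]; exact inv_mul_cancel₀ (hsne j)
    rw [h6, Matrix.diagonal_one]
    rfl
  -- assemble the X's and Y's
  obtain ⟨g', rfl⟩ : ∃ g'', g = g'' + 1 := ⟨g - 1, by omega⟩
  set Xf : Fin (g' + 1) → Matrix.SpecialLinearGroup (Fin m) ℂ :=
    fun i => if i = 0 then X₁ else 1 with hXf
  set Yf : Fin (g' + 1) → Matrix.SpecialLinearGroup (Fin m) ℂ :=
    fun i => if i = 0 then Y₁ else 1 with hYf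
  have hcommprod : (List.ofFn fun i => Xf i * Yf i * (Xf i)⁻¹ * (Yf i)⁻¹).prod = Q := by
    rw [List.ofFn_succ, List.prod_cons]
    have htail : (List.ofFn fun i : Fin g' =>
        Xf i.succ * Yf i.succ * (Xf i.succ)⁻¹ * (Yf i.succ)⁻¹).prod = 1 := by
      apply List.prod_eq_one
      intro x hx
      rw [List.mem_ofFn] at hx
      obtain ⟨i, rfl⟩ := hx
      simp [hXf, hYf, Fin.succ_ne_zero i]
    rw [htail, mul_one]
    simp only [hXf, hYf, if_pos rfl]
    exact hQcomm
  refine ⟨Xf, Yf, B, ?_, ?_⟩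
  · rw [hcommprod]; exact hQB
  · intro i k hk1 hkm
    have hkm' : k < m := by omega
    have hcp : (Matrix.charpoly ((B i : Matrix (Fin m) (Fin m) ℂ))).coeff (m - k)
        = (-1) ^ k * τ i k := by
      show (Matrix.charpoly (Matrix.diagonal (r i))).coeff (m - k) = _
      rw [charpoly_diag', ← hrr i, pc_coeff m (c i) k hk1 (by omega)]
      rw [hc]
      simp [Nat.ne_of_lt hkm']
    rw [charCoeff, hcp, ← mul_assoc, ← mul_pow]
    norm_num
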